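/- Let h : X₁^OTW → X₂^OTW be a conjugacy between OTW-subshifts over alphabets 𝒜₁ and 𝒜₂, let α ∈ L_{X₁} and let F ⊆ 𝒜₁ be a finite set. Then h(𝒵₁(α,F)) = ⋃_{i=1}^m 𝒵₂(μⁱ, Mⁱ) for some m ∈ ℕ, words μⁱ ∈ L_{X₂} with |μⁱ| ≥ |α| and finite sets Mⁱ ⊆ 𝒜₂. Moreover, if α ∈ X₁^fin, then μ^j = h(α) for some j, and every μⁱ with |μⁱ| = |α| and μⁱ ∈ X₂^fin satisfies μⁱ = h(α). -/

import Mathlib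

open Set

section Subshift

variable {A : Type*}

/-- The word `w` occurs as a block of `x` at position `i`. -/
def IsBlockAt (x : ℕ → A) (w : List A) (i : ℕ) : Prop :=
  ∀ j, ∀ _ : j < w.length, x (i + j) = w[j]

/-- The subshift `X_F ⊆ 𝒜^ℕ` determined by the set `F` of forbidden words. -/
def SubshiftOf (F : Set (List A)) : Set (ℕ → A) :=
  {x | ∀ w ∈ F, ∀ i, ¬ IsBlockAt x w i}

/-- The language of the subshift: all finite words occurring in some element of `X_F`. -/
def Lang (F : Set (List A)) : Set (List A) :=
  {w | ∃ x ∈ SubshiftOf F, ∃ i, IsBlockAt x w i}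

/-- Concatenation of a finite word with an infinite sequence. -/
def wcat (w : List A) (x : ℕ → A) : ℕ → A := fun n =>
  if h : n < w.length then w[n] else x (n - w.length)

/-- `C(α,β) = {β x ∈ X : α x ∈ X}`. -/
def Cset (F : Set (List A)) (α β : List A) : Set (ℕ → A) :=
  {y | ∃ x : ℕ → A, y = wcat β x ∧ wcat β x ∈ SubshiftOf F ∧ wcat α x ∈ SubshiftOf F}

/-- The cylinder set `Z_β = C(ω,β)`. -/
def Zcyl (F : Set (List A)) (β : List A) : Set (ℕ → A) := Cset F [] β

/-- The follower set `F_α = C(α,ω)`. -/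
def Fol (F : Set (List A)) (α : List A) : Set (ℕ → A) := Cset F α []

/-- The relative range `r(S,w) = {x ∈ X : w x ∈ S}`. -/
def relRange (F : Set (List A)) (S : Set (ℕ → A)) (w : List A) : Set (ℕ → A) :=
  {x | x ∈ SubshiftOf F ∧ wcat w x ∈ S}

/-- Membership in the Boolean algebra `𝒰` of subsets of `X` generated by the sets
`C(α,β)`, `α, β ∈ L_X`: closed under finite unions, finite intersections and
complements in `X`. -/
inductive InU (F : Set (List A)) : Set (ℕ → A) → Prop
  | base {α β : List A} (hα : α ∈ Lang F) (hβ : β ∈ Lang F) : InU F (Cset F α β)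
  | union {S T : Set (ℕ → A)} : InU F S → InU F T → InU F (S ∪ T)
  | inter {S T : Set (ℕ → A)} : InU F S → InU F T → InU F (S ∩ T)
  | compl {S : Set (ℕ → A)} : InU F S → InU F (SubshiftOf F \ S)

/-- `αβ⁻¹` is in reduced form in the free group on the alphabet:
`α` and `β` do not end in the same letter. -/
def ReducedPair (α β : List A) : Prop :=
  ¬ ∃ c : A, α.getLast? = some c ∧ β.getLast? = some c

/-- Ultrafilters (= prime filters) of the Boolean algebra `𝒰`. -/
structure UltraU (F : Set (List A)) where
  sets : Set (Set (ℕ → A))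
  mem_inU : ∀ S ∈ sets, InU F S
  nonempty : sets.Nonempty
  empty_not_mem : ∅ ∉ sets
  inter_mem : ∀ S ∈ sets, ∀ T ∈ sets, S ∩ T ∈ sets
  superset_mem : ∀ S ∈ sets, ∀ T : Set (ℕ → A), InU F T → S ⊆ T → T ∈ sets
  prime : ∀ S T : Set (ℕ → A), InU F S → InU F T → S ∪ T ∈ sets → S ∈ sets ∨ T ∈ sets

/-- The basic (compact) open set `O_S = {ξ ∈ 𝒰̂ : S ∈ ξ}` of the Stone dual `𝒰̂`. -/
def Oset (F : Set (List A)) (S : Set (ℕ → A)) : Set (UltraU F) := {ξ | S ∈ ξ.sets}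

/-- The Stone topology on `𝒰̂`. -/
instance (F : Set (List A)) : TopologicalSpace (UltraU F) :=
  TopologicalSpace.generateFrom {V | ∃ S : Set (ℕ → A), InU F S ∧ V = Oset F S}

/-- The graph of the partially defined map `σ̂` on `𝒰̂`:
`sigmaHatRel F ξ η` holds iff `ξ ∈ dom σ̂` and `η = σ̂(ξ)`. -/
def sigmaHatRel (F : Set (List A)) (ξ η : UltraU F) : Prop :=
  ∃ a : A, Zcyl F [a] ∈ ξ.sets ∧
    η.sets = {B : Set (ℕ → A) | InU F B ∧ ∃ S ∈ ξ.sets, relRange F S [a] ⊆ B}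

/- The OTW subshift, modelled inside `ℕ → Option A`; a finite word corresponds to a
sequence that is eventually `none` (`none` playing the role of the symbol `∞`). -/

/-- The shift map, deleting the first letter (it sends sequences of length `≤ 1`
to the empty sequence). -/
def shiftO (y : ℕ → Option A) : ℕ → Option A := fun i => y (i + 1)

/-- An infinite sequence, as an element of the OTW model. -/
def ofSeq (x : ℕ → A) : ℕ → Option A := fun i => some (x i)

/-- A finite word, as an element of the OTW model. -/
def ofWord (w : List A) : ℕ → Option A := fun i =>
  if h : i < w.length then some w[i] else none

/-- Concatenation of a finite word with an element of the OTW model. -/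
def wcatO (w : List A) (y : ℕ → Option A) : ℕ → Option A := fun n =>
  if h : n < w.length then some w[n] else y (n - w.length)

/-- The finite words belonging to `X^fin`: those `w` for which there are infinitely many
letters `a` such that `w a y ∈ X^inf` for some `y`. -/
def XFin (F : Set (List A)) : Set (List A) :=
  {w | {a : A | ∃ y : ℕ → A, wcat (w ++ [a]) y ∈ SubshiftOf F}.Infinite}

/-- The OTW subshift `X^OTW = X^inf ∪ X^fin`. -/
def OTW (F : Set (List A)) : Set (ℕ → Option A) :=
  ofSeq '' SubshiftOf F ∪ ofWord '' XFin F

theorem ofSeq_mem_OTW {F : Set (List A)} {x : ℕ → A} (hx : x ∈ SubshiftOf F) :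
    ofSeq x ∈ OTW F := Or.inl ⟨x, hx, rfl⟩

theorem ofWord_mem_OTW {F : Set (List A)} {w : List A} (hw : w ∈ XFin F) :
    ofWord w ∈ OTW F := Or.inr ⟨w, hw, rfl⟩

/-- The generalised cylinder `𝒵(w,F') = {y ∈ X^OTW : y` begins with `w`, and the next
letter of `y` is not in `F'}`. -/
def genCyl (F : Set (List A)) (w : List A) (F' : Set A) : Set (ℕ → Option A) :=
  {y | y ∈ OTW F ∧ (∀ j, ∀ _ : j < w.length, y j = some w[j]) ∧
    ∀ a ∈ F', y w.length ≠ some a}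

/-- The follower set `ℱ(w) = {y ∈ X^OTW : w y ∈ X^OTW}` in the OTW subshift. -/
def folO (F : Set (List A)) (w : List A) : Set (ℕ → Option A) :=
  {y | y ∈ OTW F ∧ wcatO w y ∈ OTW F}

/-- The topology on `X^OTW`, generated by the generalised cylinders. -/
instance (F : Set (List A)) : TopologicalSpace ↥(OTW F) :=
  TopologicalSpace.generateFrom
    {V | ∃ w ∈ Lang F, ∃ F' : Set A, F'.Finite ∧
      V = {y : ↥(OTW F) | (y : ℕ → Option A) ∈ genCyl F w F'}}

/-- The graph of the map `π : 𝒰̂ → X^OTW`: `piRel F ξ y` holds iff `π(ξ) = y`.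
(`y` begins with a nonempty word `w` iff `Z_w ∈ ξ`.) -/
def piRel (F : Set (List A)) (ξ : UltraU F) (y : ℕ → Option A) : Prop :=
  (∀ i, y i = none → y (i + 1) = none) ∧
  ∀ w : List A, w ≠ [] →
    ((∀ j, ∀ _ : j < w.length, y j = some w[j]) ↔ Zcyl F w ∈ ξ.sets)

end Subshift

section Conjugacy

variable {A₁ A₂ : Type*}

/-- `h` commutes with the shift maps. -/
def ShiftCommuting (F₁ : Set (List A₁)) (F₂ : Set (List A₂))
    (h : ↥(OTW F₁) → ↥(OTW F₂)) : Prop :=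
  ∀ (y : ↥(OTW F₁)) (hy : shiftO (y : ℕ → Option A₁) ∈ OTW F₁),
    (h ⟨shiftO (y : ℕ → Option A₁), hy⟩ : ℕ → Option A₂) =
      shiftO ((h y : ℕ → Option A₂))

/-- `h` is length-preserving: `h y` and `y` have the same length, i.e. the same
positions where the symbol `∞` (here `none`) occurs. -/
def LengthPreserving (F₁ : Set (List A₁)) (F₂ : Set (List A₂))
    (h : ↥(OTW F₁) → ↥(OTW F₂)) : Prop :=
  ∀ (y : ↥(OTW F₁)) (i : ℕ),
    ((h y : ℕ → Option A₂) i = none ↔ (y : ℕ → Option A₁) i = none)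

/-- A conjugacy of OTW subshifts: a homeomorphism commuting with the shifts and
preserving lengths. -/
def IsConjugacy (F₁ : Set (List A₁)) (F₂ : Set (List A₂))
    (h : ↥(OTW F₁) ≃ₜ ↥(OTW F₂)) : Prop :=
  ShiftCommuting F₁ F₂ ⇑h ∧ LengthPreserving F₁ F₂ ⇑h

/-- The image `h̄(S) = h(S)` of a subset `S ⊆ X₁` under (the restriction to `X₁` of)
a map `h : X₁^OTW → X₂^OTW`. -/
def hbar (F₁ : Set (List A₁)) (F₂ : Set (List A₂))
    (h : ↥(OTW F₁) → ↥(OTW F₂)) (S : Set (ℕ → A₁)) : Set (ℕ → A₂) :=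
  {z | ∃ y : ↥(OTW F₁), (y : ℕ → Option A₁) ∈ ofSeq '' S ∧
    ofSeq z = (h y : ℕ → Option A₂)}

end Conjugacy

section Helpers

variable {A : Type*} {F : Set (List A)}

/-- `y` begins with the word `w`. -/
def MatchesW (y : ℕ → Option A) (w : List A) : Prop :=
  ∀ j, ∀ _ : j < w.length, y j = some w[j]

theorem ofSeq_ne_none (x : ℕ → A) (i : ℕ) : ofSeq x i ≠ none := by
  simp [ofSeq]

theorem ofWord_eq_none_iff (w : List A) (i : ℕ) : ofWord w i = none ↔ w.length ≤ i := by
  unfold ofWord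
  split <;> simp_all <;> omega

theorem ofWord_apply_lt (w : List A) (i : ℕ) (h : i < w.length) : ofWord w i = some w[i] := by
  simp [ofWord, h]

theorem otw_none_mono {y : ℕ → Option A} (hy : y ∈ OTW F) {i j : ℕ} (hij : i ≤ j)
    (h : y i = none) : y j = none := by
  rcases hy with ⟨x, -, rfl⟩ | ⟨w, -, rfl⟩
  · exact absurd h (ofSeq_ne_none x i)
  · rw [ofWord_eq_none_iff] at h ⊢; omega

/-- An element of `X^fin` can be extended by a letter to the prefix of an element of `X`. -/
theorem XFin.extend {v : List A} (hv : v ∈ XFin F) :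
    ∃ b : A, ∃ y : ℕ → A, wcat (v ++ [b]) y ∈ SubshiftOf F := by
  obtain ⟨b, hb⟩ := hv.nonempty
  exact ⟨b, hb⟩

theorem wcat_apply_lt (w : List A) (x : ℕ → A) (n : ℕ) (h : n < w.length) :
    wcat w x n = w[n] := by simp [wcat, h]

/-- If `y ∈ X^OTW` begins with `w` at position `i` (all entries being letters),
then `w` occurs at position `i` in some element of `X`. -/
theorem exists_block {y : ℕ → Option A} (hy : y ∈ OTW F) {w : List A} {i : ℕ}
    (hm : ∀ j, ∀ _ : j < w.length, y (i + j) = some w[j]) :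
    ∃ x ∈ SubshiftOf F, IsBlockAt x w i := by
  rcases hy with ⟨x, hx, rfl⟩ | ⟨v, hv, rfl⟩
  · refine ⟨x, hx, fun j hj => ?_⟩
    have := hm j hj
    simpa [ofSeq] using this
  · obtain ⟨b, y', hby⟩ := XFin.extend hv
    have hlen : ∀ j, j < w.length → i + j < v.length := by
      intro j hj
      have := hm j hj
      by_contra hc
      have : ofWord v (i+j) = none := (ofWord_eq_none_iff v (i+j)).mpr (by omega)
      simp_all
    refine ⟨wcat (v ++ [b]) y', hby, fun j hj => ?_⟩
    have h1 : i + j < (v ++ [b]).length := by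
      have := hlen j hj; simp; omega
    have h2 := hm j hj
    rw [ofWord] at h2
    rw [wcat_apply_lt _ _ _ h1]
    have h3 : i + j < v.length := hlen j hj
    simp only [h3, dif_pos] at h2
    have h4 : (v ++ [b])[i+j] = v[i+j] := List.getElem_append_left h3
    rw [h4]
    exact Option.some_injective _ h2

theorem mem_Lang_of_matches {y : ℕ → Option A} (hy : y ∈ OTW F) {w : List A}
    (hm : MatchesW y w) : w ∈ Lang F := by
  obtain ⟨x, hx, hb⟩ := exists_block hy (i := 0) (fun j hj => by simpa using hm j hj)
  exact ⟨x, hx, 0, hb⟩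

theorem wcat_eq_of_matches {w : List A} {x : ℕ → A} (h : ∀ j, ∀ _ : j < w.length, x j = w[j]) :
    wcat w (fun n => x (n + w.length)) = x := by
  funext n
  unfold wcat
  split
  · next hn => exact (h n hn).symm
  · next hn => simp; congr 1; omega

/-- If `y ∈ X^OTW` begins with `w`, then `w x ∈ X` for some `x`. -/
theorem exists_wcat_of_matches {y : ℕ → Option A} (hy : y ∈ OTW F) {w : List A}
    (hm : MatchesW y w) : ∃ x : ℕ → A, wcat w x ∈ SubshiftOf F := by
  obtain ⟨x, hx, hb⟩ := exists_block hy (i := 0) (fun j hj => by simpa using hm j hj)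
  refine ⟨fun n => x (n + w.length), ?_⟩
  rw [wcat_eq_of_matches (fun j hj => by simpa using hb j hj)]
  exact hx

/-- A member of `X^OTW` which begins with `w` and has length `|w|` is `ofWord w`,
and `w ∈ X^fin`. -/
theorem eq_ofWord_of_matches {y : ℕ → Option A} (hy : y ∈ OTW F) {w : List A}
    (hm : MatchesW y w) (hnone : y w.length = none) : w ∈ XFin F ∧ y = ofWord w := by
  rcases hy with ⟨x, -, rfl⟩ | ⟨v, hv, rfl⟩
  · exact absurd hnone (ofSeq_ne_none x _)
  · have hlen : v.length = w.length := by
      have h1 : v.length ≤ w.length := (ofWord_eq_none_iff v w.length).mp hnone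
      have h2 : ¬ v.length < w.length := by
        intro hc
        have := hm v.length hc
        rw [ofWord_eq_none_iff v v.length |>.mpr le_rfl] at this
        exact nomatch this
      omega
    have : v = w := by
      apply List.ext_getElem hlen
      intro i h1 h2
      have := hm i h2
      rw [ofWord_apply_lt v i h1] at this
      exact Option.some_injective _ this
    subst this
    exact ⟨hv, rfl⟩

end Helpers
section Compactness

variable {A : Type*} {F : Set (List A)}

theorem genCyl_subset_OTW (w : List A) (F' : Set A) : genCyl F w F' ⊆ OTW F :=
  fun _ hy => hy.1

/-- The OTW subshift is compact. -/
theorem otw_compactSpace (F : Set (List A)) : CompactSpace ↥(OTW F) := by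
  rw [← isCompact_univ_iff, isCompact_iff_ultrafilter_le_nhds]
  intro 𝒰 _
  classical
  set P : ℕ → Option A → Prop := fun n o => {y : ↥(OTW F) | (y : ℕ → Option A) n = o} ∈ 𝒰 with hP
  -- membership of generated neighborhoods
  have hnhds : ∀ (y : ↥(OTW F)),
      (∀ V ∈ {V | ∃ w ∈ Lang F, ∃ F' : Set A, F'.Finite ∧
        V = {y : ↥(OTW F) | (y : ℕ → Option A) ∈ genCyl F w F'}}, y ∈ V → V ∈ 𝒰) →
      ↑𝒰 ≤ nhds y := by
    intro y hy
    have heq : nhds y = ⨅ V ∈ {V | y ∈ V ∧ V ∈ {V | ∃ w ∈ Lang F, ∃ F' : Set A, F'.Finite ∧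
        V = {y : ↥(OTW F) | (y : ℕ → Option A) ∈ genCyl F w F'}}}, Filter.principal V :=
      TopologicalSpace.nhds_generateFrom
    rw [heq]
    refine le_iInf₂ fun V hV => ?_
    exact Filter.le_principal_iff.mpr (hy V hV.2 hV.1)
  have hmatch : ∀ (k : ℕ) (g : ∀ n, n < k → A), (∀ n (h : n < k), P n (some (g n h))) →
      {y : ↥(OTW F) | ∀ n (h : n < k), (y : ℕ → Option A) n = some (g n h)} ∈ 𝒰 := by
    intro k g hg
    have : {y : ↥(OTW F) | ∀ n (h : n < k), (y : ℕ → Option A) n = some (g n h)} =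
        ⋂ n ∈ Finset.range k, {y : ↥(OTW F) | ∀ h : n < k, (y : ℕ → Option A) n = some (g n h)} := by
      ext y; simp
    rw [this]
    refine (Filter.biInter_finset_mem _).mpr fun n hn => ?_
    have hn' : n < k := Finset.mem_range.mp hn
    have := hg n hn'
    refine Filter.mem_of_superset this ?_
    intro y hy h
    exact hy
  by_cases hall : ∀ n, ∃ a : A, P n (some a)
  · -- infinite limit
    choose z hz using hall
    have hzX : z ∈ SubshiftOf F := by
      intro u hu i hblock
      have hmem : {y : ↥(OTW F) | ∀ j (hj : j < u.length), (y : ℕ → Option A) (i + j) = some u[j]} ∈ 𝒰 := by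
        have : {y : ↥(OTW F) | ∀ j (hj : j < u.length), (y : ℕ → Option A) (i + j) = some u[j]} =
            ⋂ j ∈ Finset.range u.length,
              {y : ↥(OTW F) | ∀ hj : j < u.length, (y : ℕ → Option A) (i + j) = some u[j]} := by
          ext y; simp
        rw [this]
        refine (Filter.biInter_finset_mem _).mpr fun j hj => ?_
        have hj' : j < u.length := Finset.mem_range.mp hj
        have h1 := hz (i + j)
        rw [hblock j hj'] at h1
        exact Filter.mem_of_superset h1 fun y hy _ => hy
      obtain ⟨y₀, hy₀⟩ := Ultrafilter.nonempty_of_mem (f := 𝒰) (Ultrafilter.mem_coe.mpr hmem)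
      obtain ⟨x, hx, hb⟩ := exists_block y₀.2 hy₀
      exact hx u hu i hb
    refine ⟨⟨ofSeq z, ofSeq_mem_OTW hzX⟩, trivial, hnhds _ ?_⟩
    rintro V ⟨w, hw, F', hF', rfl⟩ hyV
    have hmw : ∀ j (hj : j < w.length), z j = w[j] := by
      intro j hj
      have := hyV.2.1 j hj
      simpa [ofSeq] using this
    have hlast : z w.length ∉ F' := by
      intro hc
      exact hyV.2.2 _ hc rfl
    have h1 : {y : ↥(OTW F) | ∀ n (h : n < w.length), (y : ℕ → Option A) n = some ((fun n _ => z n) n h)} ∈ 𝒰 :=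
      hmatch w.length (fun n _ => z n) (fun n _ => hz n)
    have h2 : {y : ↥(OTW F) | (y : ℕ → Option A) w.length = some (z w.length)} ∈ 𝒰 := hz w.length
    refine Filter.mem_of_superset (Filter.inter_mem h1 h2) ?_
    rintro y ⟨hy1, hy2⟩
    refine ⟨y.2, fun j hj => ?_, fun a ha hc => ?_⟩
    · have := hy1 j hj
      simpa [hmw j hj] using this
    · rw [hy2] at hc
      exact hlast (by rw [Option.some_injective _ hc]; exact ha)
  · -- finite limit
    push_neg at hall
    have hex : ∃ n, ∀ a : A, ¬ P n (some a) := hall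
    set k := Nat.find hex with hk
    have hks : ∀ a : A, ¬ P k (some a) := Nat.find_spec hex
    have hlt : ∀ n, n < k → ∃ a : A, P n (some a) := by
      intro n hn
      by_contra hc
      push_neg at hc
      exact Nat.find_min hex hn hc
    choose g hg using hlt
    set w : List A := List.ofFn (fun i : Fin k => g i i.2) with hwdef
    have hwlen : w.length = k := by simp [hwdef]
    have hwget : ∀ j (hj : j < w.length), w[j] = g j (hwlen ▸ hj) := by
      intro j hj
      simp [hwdef]
    have hT0 : {y : ↥(OTW F) | ∀ n (h : n < k), (y : ℕ → Option A) n = some (g n h)} ∈ 𝒰 :=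
      hmatch k g hg
    -- w ∈ XFin F
    have hwfin : w ∈ XFin F := by
      rw [XFin]
      by_contra hSfin
      simp only [Set.mem_setOf_eq, Set.not_infinite] at hSfin
      set S := {a : A | ∃ y : ℕ → A, wcat (w ++ [a]) y ∈ SubshiftOf F} with hS
      have hcover : {y : ↥(OTW F) | ∀ n (h : n < k), (y : ℕ → Option A) n = some (g n h)} ⊆
          {y : ↥(OTW F) | (y : ℕ → Option A) k = none} ∪
            ⋃ a ∈ S, {y : ↥(OTW F) | (y : ℕ → Option A) k = some a} := by
        intro y hy
        rcases ho : (y : ℕ → Option A) k with _ | a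
        · exact Or.inl ho
        · refine Or.inr (Set.mem_biUnion ?_ ho)
          have hmwa : MatchesW (y : ℕ → Option A) (w ++ [a]) := by
            intro j hj
            simp only [List.length_append, List.length_singleton, hwlen] at hj
            rcases Nat.lt_or_ge j k with hjk | hjk
            · have := hy j hjk
              rw [this]
              congr 1
              rw [List.getElem_append_left (by omega)]
              exact (hwget j (by omega)).symm
            · have hjeq : j = k := by omega
              have hjl : w.length ≤ j := by omega
              have hget : (w ++ [a])[j] = a := by
                rw [List.getElem_append_right hjl]
                simp
              rw [hget, hjeq, ho]
          obtain ⟨x, hx⟩ := exists_wcat_of_matches y.2 hmwa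
          exact ⟨x, hx⟩
      have hun : ({y : ↥(OTW F) | (y : ℕ → Option A) k = none} ∪
          ⋃ a ∈ S, {y : ↥(OTW F) | (y : ℕ → Option A) k = some a}) ∈ 𝒰 :=
        Filter.mem_of_superset hT0 hcover
      rcases (Ultrafilter.union_mem_iff (f := 𝒰)).mp hun with hnone | hsome
      · -- limit is ofWord w, so w ∈ XFin: contradiction with hSfin via membership
        obtain ⟨y₀, hy₀1, hy₀2⟩ := Ultrafilter.nonempty_of_mem (f := 𝒰) (Filter.inter_mem (Ultrafilter.mem_coe.mpr hT0) (Ultrafilter.mem_coe.mpr hnone))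
        have hmw : MatchesW (y₀ : ℕ → Option A) w := by
          intro j hj
          rw [hy₀1 j (hwlen ▸ hj)]
          congr 1
          exact (hwget j hj).symm
        have := (eq_ofWord_of_matches y₀.2 hmw (by rwa [hwlen])).1
        rw [XFin] at this
        exact this hSfin
      · obtain ⟨a, haS, ha⟩ := (Ultrafilter.finite_biUnion_mem_iff hSfin).mp hsome
        exact hks a ha
    refine ⟨⟨ofWord w, ofWord_mem_OTW hwfin⟩, trivial, hnhds _ ?_⟩
    rintro V ⟨u, hu, F', hF', rfl⟩ hyV
    have hmu : ∀ j (hj : j < u.length), ofWord w j = some u[j] := hyV.2.1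
    have hulen : u.length ≤ k := by
      by_contra hc
      push_neg at hc
      have := hmu k (by omega)
      rw [(ofWord_eq_none_iff w k).mpr (by omega)] at this
      exact nomatch this
    have huw : ∀ j (hj : j < u.length), u[j] = w[j]'(by omega) := by
      intro j hj
      have := hmu j hj
      rw [ofWord_apply_lt w j (by omega)] at this
      exact (Option.some_injective _ this).symm
    rcases Nat.lt_or_ge u.length k with hlt' | hge
    · -- |u| < k
      have h2 : {y : ↥(OTW F) | (y : ℕ → Option A) u.length = some (g u.length hlt')} ∈ 𝒰 :=
        hg u.length hlt'
      refine Filter.mem_of_superset (Filter.inter_mem hT0 h2) ?_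
      rintro y ⟨hy1, hy2⟩
      refine ⟨y.2, fun j hj => ?_, fun a ha hc => ?_⟩
      · rw [hy1 j (by omega), huw j hj, hwget j (by omega)]
      · rw [hy2] at hc
        have h3 : ofWord w u.length ≠ some a := hyV.2.2 a ha
        rw [ofWord_apply_lt w u.length (by omega), hwget u.length (by omega)] at h3
        exact h3 (by rw [Option.some_injective _ hc])
    · have hueq : u.length = k := by omega
      have h2 : {y : ↥(OTW F) | ∀ a ∈ F', (y : ℕ → Option A) k ≠ some a} ∈ 𝒰 := by
        have : {y : ↥(OTW F) | ∀ a ∈ F', (y : ℕ → Option A) k ≠ some a} =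
            (⋃ a ∈ F', {y : ↥(OTW F) | (y : ℕ → Option A) k = some a})ᶜ := by
          ext y; simp
        rw [this, Ultrafilter.compl_mem_iff_notMem]
        intro hc
        obtain ⟨a, -, ha⟩ := (Ultrafilter.finite_biUnion_mem_iff hF').mp hc
        exact hks a ha
      refine Filter.mem_of_superset (Filter.inter_mem hT0 h2) ?_
      rintro y ⟨hy1, hy2⟩
      refine ⟨y.2, fun j hj => ?_, ?_⟩
      · rw [hy1 j (by omega), huw j hj, hwget j (by omega)]
      · rw [hueq]
        exact hy2
end Compactness
section Machinery

variable {A : Type*} {F : Set (List A)}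

/-- Each generalised cylinder is open in `X^OTW`. -/
theorem genCyl_isOpen (w : List A) (F' : Set A) (hF' : F'.Finite) :
    IsOpen {y : ↥(OTW F) | (y : ℕ → Option A) ∈ genCyl F w F'} := by
  by_cases hw : w ∈ Lang F
  · exact TopologicalSpace.isOpen_generateFrom_of_mem ⟨w, hw, F', hF', rfl⟩
  · have : {y : ↥(OTW F) | (y : ℕ → Option A) ∈ genCyl F w F'} = ∅ := by
      ext y
      simp only [Set.mem_setOf_eq, Set.mem_empty_iff_false, iff_false]
      intro ⟨h1, h2, h3⟩
      exact hw (mem_Lang_of_matches y.2 h2)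
    rw [this]
    exact isOpen_empty

/-- Intersection of two generalised cylinders. -/
theorem genCyl_inter_aux {w v : List A} (F' G' : Set A) (hlen : w.length ≤ v.length) :
    genCyl F w F' ∩ genCyl F v G' = ∅ ∨
      ∃ H ⊆ F' ∪ G', genCyl F w F' ∩ genCyl F v G' = genCyl F v H := by
  by_cases hpre : ∀ j, ∀ h : j < w.length, w[j] = v[j]'(lt_of_lt_of_le h hlen)
  · rcases eq_or_lt_of_le hlen with heq | hlt
    · -- same length: w = v
      have hwv : w = v := List.ext_getElem heq fun i h1 h2 => hpre i h1
      subst hwv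
      refine Or.inr ⟨F' ∪ G', Set.Subset.rfl, ?_⟩
      ext y
      constructor
      · rintro ⟨⟨h1, h2, h3⟩, ⟨-, -, h6⟩⟩
        exact ⟨h1, h2, fun a ha => ha.elim (h3 a) (h6 a)⟩
      · rintro ⟨h1, h2, h3⟩
        exact ⟨⟨h1, h2, fun a ha => h3 a (Or.inl ha)⟩, ⟨h1, h2, fun a ha => h3 a (Or.inr ha)⟩⟩
    · by_cases hmem : v[w.length] ∈ F'
      · refine Or.inl ?_
        ext y
        simp only [Set.mem_inter_iff, Set.mem_empty_iff_false, iff_false]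
        rintro ⟨⟨-, -, h3⟩, ⟨-, h5, -⟩⟩
        exact h3 _ hmem (h5 w.length hlt)
      · refine Or.inr ⟨G', Set.subset_union_right, ?_⟩
        ext y
        constructor
        · rintro ⟨-, hy⟩
          exact hy
        · rintro ⟨h1, h2, h3⟩
          refine ⟨⟨h1, fun j hj => ?_, fun a ha hc => ?_⟩, ⟨h1, h2, h3⟩⟩
          · rw [h2 j (by omega), hpre j hj]
          · rw [h2 w.length hlt] at hc
            exact hmem (by rw [← Option.some_injective _ hc] at ha; exact ha)
  · refine Or.inl ?_
    push_neg at hpre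
    obtain ⟨j, hj, hne⟩ := hpre
    ext y
    simp only [Set.mem_inter_iff, Set.mem_empty_iff_false, iff_false]
    rintro ⟨⟨-, h2, -⟩, ⟨-, h5, -⟩⟩
    have ha := h2 j hj
    have hb := h5 j (by omega)
    rw [ha] at hb
    exact hne (Option.some_injective _ hb)

/-- A nonempty finite intersection of subbasic open sets is (the trace of) a
generalised cylinder. -/
theorem sInter_subbasis (hne : (SubshiftOf F).Nonempty) {f : Set (Set ↥(OTW F))}
    (hfin : f.Finite)
    (hsub : f ⊆ {V | ∃ w ∈ Lang F, ∃ F' : Set A, F'.Finite ∧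
      V = {y : ↥(OTW F) | (y : ℕ → Option A) ∈ genCyl F w F'}}) (hnonempty : (⋂₀ f).Nonempty) :
    ∃ w ∈ Lang F, ∃ H : Set A, H.Finite ∧
      ⋂₀ f = {y : ↥(OTW F) | (y : ℕ → Option A) ∈ genCyl F w H} := by
  revert hsub hnonempty
  refine Set.Finite.induction_on f hfin ?_ ?_
  · intro hsub hnonempty
    refine ⟨[], ?_, ∅, Set.finite_empty, ?_⟩
    · obtain ⟨x, hx⟩ := hne
      exact ⟨x, hx, 0, fun j hj => by simp at hj⟩
    · ext y
      simp only [Set.sInter_empty, Set.mem_univ, Set.mem_setOf_eq, true_iff]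
      exact ⟨y.2, fun j hj => by simp at hj, fun a ha => by simp at ha⟩
  · intro V f hVf hf ih hsub hnonempty
    rw [Set.sInter_insert] at hnonempty ⊢
    obtain ⟨w₁, hw₁, F₁, hF₁, hVeq⟩ := hsub (Set.mem_insert V f)
    obtain ⟨w₂, hw₂, H₂, hH₂, hfeq⟩ :=
      ih (fun U hU => hsub (Set.mem_insert_of_mem V hU))
        (hnonempty.mono Set.inter_subset_right)
    rw [hVeq, hfeq] at hnonempty ⊢
    have hpre : {y : ↥(OTW F) | (y : ℕ → Option A) ∈ genCyl F w₁ F₁} ∩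
        {y : ↥(OTW F) | (y : ℕ → Option A) ∈ genCyl F w₂ H₂} =
        {y : ↥(OTW F) | (y : ℕ → Option A) ∈ genCyl F w₁ F₁ ∩ genCyl F w₂ H₂} := rfl
    rcases le_total w₁.length w₂.length with hle | hle
    · rcases genCyl_inter_aux (F := F) F₁ H₂ hle with hEmpty | ⟨H, hHsub, hH⟩
      · rw [hpre, hEmpty] at hnonempty
        simp at hnonempty
      · refine ⟨w₂, hw₂, H, ((hF₁.union hH₂).subset hHsub), ?_⟩
        rw [hpre, hH]
    · rw [Set.inter_comm] at hnonempty ⊢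
      have hpre' : {y : ↥(OTW F) | (y : ℕ → Option A) ∈ genCyl F w₂ H₂} ∩
          {y : ↥(OTW F) | (y : ℕ → Option A) ∈ genCyl F w₁ F₁} =
          {y : ↥(OTW F) | (y : ℕ → Option A) ∈ genCyl F w₂ H₂ ∩ genCyl F w₁ F₁} := rfl
      rcases genCyl_inter_aux (F := F) H₂ F₁ hle with hEmpty | ⟨H, hHsub, hH⟩
      · rw [hpre', hEmpty] at hnonempty
        simp at hnonempty
      · refine ⟨w₁, hw₁, H, ((hH₂.union hF₁).subset hHsub), ?_⟩
        rw [hpre', hH]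

end Machinery
section Refine

variable {A : Type*} {F : Set (List A)}

theorem ofWord_mem_genCyl {w : List A} (hw : w ∈ XFin F) (M : Set A) :
    ofWord w ∈ genCyl F w M := by
  refine ⟨ofWord_mem_OTW hw, fun j hj => ofWord_apply_lt w j hj, fun a ha hc => ?_⟩
  rw [(ofWord_eq_none_iff w w.length).mpr le_rfl] at hc
  exact nomatch hc

/-- A generalised cylinder all of whose elements have length at least `n` is a finite
union of generalised cylinders on words of length at least `n`. -/
theorem genCyl_refine (F : Set (List A)) :
    ∀ (d : ℕ) (μ : List A) (M : Set A), M.Finite → μ ∈ Lang F → (n : ℕ) → n ≤ μ.length + d →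
    (∀ z ∈ genCyl F μ M, ∀ j < n, z j ≠ none) →
    ∃ s : Set (List A × Set A), s.Finite ∧
      (∀ p ∈ s, p.1 ∈ Lang F ∧ n ≤ p.1.length ∧ p.2.Finite) ∧
      genCyl F μ M = ⋃ p ∈ s, genCyl F p.1 p.2 := by
  intro d
  induction d with
  | zero =>
    intro μ M hM hμ n hn _
    refine ⟨{(μ, M)}, Set.finite_singleton _, ?_, ?_⟩
    · rintro p rfl
      exact ⟨hμ, by simpa using hn, hM⟩
    · simp
  | succ d ih =>
    intro μ M hM hμ n hn hno
    by_cases hnn : n ≤ μ.length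
    · refine ⟨{(μ, M)}, Set.finite_singleton _, ?_, ?_⟩
      · rintro p rfl
        exact ⟨hμ, hnn, hM⟩
      · simp
    · push_neg at hnn
      have hXF : μ ∉ XFin F := by
        intro hfin
        exact hno (ofWord μ) (ofWord_mem_genCyl hfin M) μ.length hnn
          ((ofWord_eq_none_iff μ μ.length).mpr le_rfl)
      set S := {a : A | a ∉ M ∧ ∃ y ∈ OTW F, MatchesW y (μ ++ [a])} with hSdef
      have hgetlast : ∀ a : A, (μ ++ [a])[μ.length]'(by simp) = a := by
        intro a
        rw [List.getElem_append_right le_rfl]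
        simp
      have hgetin : ∀ (a : A) (j : ℕ) (hj : j < μ.length),
          (μ ++ [a])[j]'(by simp; omega) = μ[j] := by
        intro a j hj
        exact List.getElem_append_left hj
      have hSfin : S.Finite := by
        by_contra hc
        refine hXF (Set.Infinite.mono ?_ (hc : S.Infinite))
        rintro a ⟨-, y, hy, hm⟩
        exact exists_wcat_of_matches hy hm
      have hsplit : genCyl F μ M = ⋃ a ∈ S, genCyl F (μ ++ [a]) ∅ := by
        ext y
        constructor
        · rintro ⟨hy, hm, hfor⟩
          have hne : y μ.length ≠ none := by
            intro hnone
            exact hXF (eq_ofWord_of_matches hy hm hnone).1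
          obtain ⟨a, ha⟩ := Option.ne_none_iff_exists'.mp hne
          have haM : a ∉ M := fun hc => hfor a hc ha
          have hma : MatchesW y (μ ++ [a]) := by
            intro j hj
            simp only [List.length_append, List.length_singleton] at hj
            rcases Nat.lt_or_ge j μ.length with h1 | h1
            · rw [hm j h1]
              congr 1
              exact (hgetin a j h1).symm
            · have hje : j = μ.length := by omega
              subst hje
              rw [ha]
              congr 1
              exact (hgetlast a).symm
          refine Set.mem_biUnion (show a ∈ S from ⟨haM, y, hy, hma⟩) ?_
          exact ⟨hy, hma, fun b hb => by simp at hb⟩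
        · intro hy
          obtain ⟨a, haS, hy1, hy2, -⟩ := Set.mem_iUnion₂.mp hy
          refine ⟨hy1, fun j hj => ?_, fun b hb hc => ?_⟩
          · rw [hy2 j (by simp; omega)]
            congr 1
            exact hgetin a j hj
          · have := hy2 μ.length (by simp)
            rw [hgetlast a] at this
            rw [this] at hc
            exact haS.1 (by rw [← Option.some_injective _ hc] at hb; exact hb)
      have hrec : ∀ a ∈ S, ∃ s : Set (List A × Set A), s.Finite ∧
          (∀ p ∈ s, p.1 ∈ Lang F ∧ n ≤ p.1.length ∧ p.2.Finite) ∧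
          genCyl F (μ ++ [a]) ∅ = ⋃ p ∈ s, genCyl F p.1 p.2 := by
        intro a haS
        obtain ⟨haM, y, hy, hm⟩ := haS
        refine ih (μ ++ [a]) ∅ Set.finite_empty (mem_Lang_of_matches hy hm) n
          (by simp; omega) ?_
        intro z hz j hj
        have haS' : a ∈ S := ⟨haM, y, hy, hm⟩
        have hsub : genCyl F (μ ++ [a]) ∅ ⊆ genCyl F μ M := by
          rw [hsplit]
          exact Set.subset_biUnion_of_mem (u := fun b => genCyl F (μ ++ [b]) ∅) haS'
        exact hno z (hsub hz) j hj
      choose g hg1 hg2 hg3 using hrec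
      refine ⟨⋃ (a : A) (ha : a ∈ S), g a ha, ?_, ?_, ?_⟩
      · exact hSfin.biUnion' fun a ha => hg1 a ha
      · intro p hp
        simp only [Set.mem_iUnion] at hp
        obtain ⟨a, ha, hpa⟩ := hp
        exact hg2 a ha p hpa
      · rw [hsplit]
        ext z
        simp only [Set.mem_iUnion]
        constructor
        · rintro ⟨a, ha, hz⟩
          rw [hg3 a ha] at hz
          simp only [Set.mem_iUnion] at hz
          obtain ⟨p, hp, hzp⟩ := hz
          exact ⟨p, ⟨a, ha, hp⟩, hzp⟩
        · rintro ⟨p, ⟨a, ha, hp⟩, hzp⟩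
          refine ⟨a, ha, ?_⟩
          rw [hg3 a ha]
          exact Set.mem_biUnion hp hzp

end Refine

theorem conjugacy_image_genCyl {A₁ A₂ : Type*} (F₁ : Set (List A₁)) (F₂ : Set (List A₂))
    (h : ↥(OTW F₁) ≃ₜ ↥(OTW F₂)) (hconj : IsConjugacy F₁ F₂ h)
    (α : List A₁) (hα : α ∈ Lang F₁) (Fs : Set A₁) (hFs : Fs.Finite) :
    ∃ (m : ℕ) (μ : Fin m → List A₂) (M : Fin m → Set A₂),
      (∀ i, μ i ∈ Lang F₂ ∧ α.length ≤ (μ i).length ∧ (M i).Finite) ∧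
      (Subtype.val '' (⇑h '' {y : ↥(OTW F₁) | (y : ℕ → Option A₁) ∈ genCyl F₁ α Fs})
        = ⋃ i, genCyl F₂ (μ i) (M i)) ∧
      ∀ hfin : α ∈ XFin F₁,
        (∃ j, ofWord (μ j) = (h ⟨ofWord α, ofWord_mem_OTW hfin⟩ : ℕ → Option A₂)) ∧
        ∀ i, (μ i).length = α.length → μ i ∈ XFin F₂ →
          ofWord (μ i) = (h ⟨ofWord α, ofWord_mem_OTW hfin⟩ : ℕ → Option A₂) := by
  classical
  obtain ⟨hSC, hLP⟩ := hconj
  haveI : CompactSpace ↥(OTW F₁) := otw_compactSpace F₁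
  set K : Set ↥(OTW F₁) := {y | (y : ℕ → Option A₁) ∈ genCyl F₁ α Fs} with hKdef
  have hKopen : IsOpen K := genCyl_isOpen α Fs hFs
  have hKclosed : IsClosed K := by
    rw [← isOpen_compl_iff]
    have hcompl : Kᶜ =
        (⋃ j : Fin α.length,
          {y : ↥(OTW F₁) | (y : ℕ → Option A₁) ∈ genCyl F₁ (α.take j) {α[(j : ℕ)]}}) ∪
        ⋃ a ∈ Fs, {y : ↥(OTW F₁) | (y : ℕ → Option A₁) ∈ genCyl F₁ (α ++ [a]) ∅} := by
      ext y
      simp only [Set.mem_compl_iff, hKdef, Set.mem_setOf_eq, Set.mem_union, Set.mem_iUnion]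
      constructor
      · intro hy
        by_cases hM : MatchesW (y : ℕ → Option A₁) α
        · have hbad : ∃ a ∈ Fs, (y : ℕ → Option A₁) α.length = some a := by
            by_contra hc
            push_neg at hc
            exact hy ⟨y.2, hM, hc⟩
          obtain ⟨a, ha, haeq⟩ := hbad
          refine Or.inr ⟨a, ha, y.2, fun j hj => ?_, fun b hb => by simp at hb⟩
          simp only [List.length_append, List.length_singleton] at hj
          rcases Nat.lt_or_ge j α.length with h1 | h1
          · have := hM j h1
            rw [this]
            congr 1
            exact (List.getElem_append_left h1).symm
          · have hje : j = α.length := by omega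
            subst hje
            rw [haeq]
            congr 1
            rw [List.getElem_append_right le_rfl]
            simp
        · rw [MatchesW] at hM
          push_neg at hM
          have hex : ∃ j, j < α.length ∧ (y : ℕ → Option A₁) j ≠ ofWord α j := by
            obtain ⟨j, hj, hne⟩ := hM
            exact ⟨j, hj, by rw [ofWord_apply_lt α j hj]; exact hne⟩
          set j₀ := Nat.find hex with hj₀def
          obtain ⟨hj₀lt, hj₀ne⟩ := Nat.find_spec hex
          have htklen : (α.take j₀).length = j₀ := by
            simp [List.length_take]; omega
          refine Or.inl ⟨⟨j₀, hj₀lt⟩, y.2, fun i hi => ?_, fun b hb => ?_⟩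
          · rw [htklen] at hi
            have hmin := Nat.find_min hex hi
            push_neg at hmin
            have hi' : i < α.length := by omega
            have h2 := hmin hi'
            rw [ofWord_apply_lt α i hi'] at h2
            rw [h2]
            congr 1
            exact List.getElem_take.symm
          · simp only [Set.mem_singleton_iff] at hb
            subst hb
            rw [htklen]
            rwa [ofWord_apply_lt α j₀ hj₀lt] at hj₀ne
      · rintro (⟨j, -, hm, hfor⟩ | ⟨a, haFs, -, hm, -⟩) ⟨-, hM, hC⟩
        · have htklen : (α.take (j : ℕ)).length = (j : ℕ) := by
            simp [List.length_take]
          have h1 := hfor α[(j : ℕ)] rfl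
          rw [htklen] at h1
          exact h1 (hM j j.2)
        · have h1 := hm α.length (by simp)
          have h2 : (α ++ [a])[α.length]'(by simp) = a := by
            rw [List.getElem_append_right le_rfl]; simp
          rw [h2] at h1
          exact hC a haFs h1
    rw [hcompl]
    exact (isOpen_iUnion fun j => genCyl_isOpen _ _ (Set.finite_singleton _)).union
      (isOpen_biUnion fun a _ => genCyl_isOpen _ _ Set.finite_empty)
  have hKcomp : IsCompact K := hKclosed.isCompact
  set U : Set ↥(OTW F₂) := ⇑h '' K with hUdef
  have hUopen : IsOpen U := (Homeomorph.isOpen_image h).mpr hKopen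
  have hUcomp : IsCompact U := hKcomp.image h.continuous
  -- nonemptiness of the target subshift
  have hX2ne : (SubshiftOf F₂).Nonempty := by
    obtain ⟨x, hx, -⟩ := hα
    set y1 : ↥(OTW F₁) := ⟨ofSeq x, ofSeq_mem_OTW hx⟩ with hy1
    rcases (h y1).2 with ⟨z, hz, -⟩ | ⟨v, -, hveq⟩
    · exact ⟨z, hz⟩
    · exfalso
      have h1 : (h y1 : ℕ → Option A₂) v.length = none := by
        rw [← hveq]
        exact (ofWord_eq_none_iff v _).mpr le_rfl
      exact ofSeq_ne_none x _ ((hLP y1 v.length).mp h1)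
  -- the subbasis and basis
  set gens : Set (Set ↥(OTW F₂)) := {V | ∃ w ∈ Lang F₂, ∃ F' : Set A₂, F'.Finite ∧
      V = {y : ↥(OTW F₂) | (y : ℕ → Option A₂) ∈ genCyl F₂ w F'}} with hgens
  have hB : TopologicalSpace.IsTopologicalBasis
      ((fun f : Set (Set ↥(OTW F₂)) => ⋂₀ f) '' {f : Set (Set ↥(OTW F₂)) | f.Finite ∧ f ⊆ gens}) :=
    TopologicalSpace.isTopologicalBasis_of_subbasis rfl
  obtain ⟨SS, hSS1, hSS2⟩ := hB.open_eq_sUnion hUopen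
  have hVsubU : ∀ V : SS, (V : Set ↥(OTW F₂)) ⊆ U := by
    intro V
    rw [hSS2]
    exact Set.subset_sUnion_of_mem V.2
  have hcover : U ⊆ ⋃ (V : SS), (V : Set ↥(OTW F₂)) := by
    rw [hSS2, Set.sUnion_eq_iUnion]
  obtain ⟨t, ht⟩ := hUcomp.elim_finite_subcover (fun V : SS => (V : Set ↥(OTW F₂)))
    (fun V => hB.isOpen (hSS1 V.2)) hcover
  -- decompose each piece of the cover into good cylinders
  have hstep : ∀ V : SS, ∃ s : Set (List A₂ × Set A₂), s.Finite ∧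
      (∀ p ∈ s, p.1 ∈ Lang F₂ ∧ α.length ≤ p.1.length ∧ p.2.Finite) ∧
      (V : Set ↥(OTW F₂)) = ⋃ p ∈ s,
        {y : ↥(OTW F₂) | (y : ℕ → Option A₂) ∈ genCyl F₂ p.1 p.2} := by
    intro V
    by_cases hVne : (V : Set ↥(OTW F₂)).Nonempty
    · obtain ⟨f, ⟨hffin, hfsub⟩, hfeq⟩ := hSS1 V.2
      have hfeq' : ⋂₀ f = (V : Set ↥(OTW F₂)) := hfeq
      have hne' : (⋂₀ f : Set ↥(OTW F₂)).Nonempty := by rwa [hfeq']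
      obtain ⟨w, hw, H, hH, hweq⟩ := sInter_subbasis hX2ne hffin hfsub hne'
      have hVeq : (V : Set ↥(OTW F₂)) =
          {y : ↥(OTW F₂) | (y : ℕ → Option A₂) ∈ genCyl F₂ w H} :=
        hfeq'.symm.trans hweq
      have hno : ∀ z ∈ genCyl F₂ w H, ∀ j < α.length, z j ≠ none := by
        intro z hz j hj
        have hzU : (⟨z, hz.1⟩ : ↥(OTW F₂)) ∈ U := by
          apply hVsubU V
          rw [hVeq]
          exact hz
        obtain ⟨y, hyK, hyeq⟩ := hzU
        intro hc
        have hc' : (h y : ℕ → Option A₂) j = none := by rw [hyeq]; exact hc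
        have h2 := (hLP y j).mp hc'
        have hsome := hyK.2.1 j hj
        rw [hsome] at h2
        exact nomatch h2
      obtain ⟨s, hsfin, hsprop, hseq⟩ := genCyl_refine F₂ α.length w H hH hw α.length
        (by omega) hno
      refine ⟨s, hsfin, hsprop, ?_⟩
      rw [hVeq]
      ext y
      simp only [Set.mem_setOf_eq, hseq, Set.mem_iUnion]
    · refine ⟨∅, Set.finite_empty, by simp, ?_⟩
      rw [Set.not_nonempty_iff_eq_empty.mp hVne]
      simp
  choose sF hsF1 hsF2 hsF3 using hstep
  set stot : Set (List A₂ × Set A₂) := ⋃ V ∈ t, sF V with hstotdef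
  have hstotfin : stot.Finite := t.finite_toSet.biUnion fun V _ => hsF1 V
  have hUeq : U = ⋃ V ∈ t, (V : Set ↥(OTW F₂)) := by
    apply Set.Subset.antisymm ht
    intro y hy
    obtain ⟨V, hVt, hyV⟩ := Set.mem_iUnion₂.mp hy
    exact hVsubU V hyV
  have hUU : U = ⋃ p ∈ stot, {y : ↥(OTW F₂) | (y : ℕ → Option A₂) ∈ genCyl F₂ p.1 p.2} := by
    rw [hUeq]
    ext y
    simp only [Set.mem_iUnion, hstotdef]
    constructor
    · rintro ⟨V, hVt, hyV⟩
      rw [hsF3 V] at hyV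
      simp only [Set.mem_iUnion] at hyV
      obtain ⟨p, hp, hyp⟩ := hyV
      exact ⟨p, ⟨V, hVt, hp⟩, hyp⟩
    · rintro ⟨p, ⟨V, hVt, hp⟩, hyp⟩
      refine ⟨V, hVt, ?_⟩
      rw [hsF3 V]
      simp only [Set.mem_iUnion]
      exact ⟨p, hp, hyp⟩
  -- output data
  set l : List (List A₂ × Set A₂) := hstotfin.toFinset.toList with hldef
  have hmeml : ∀ p : List A₂ × Set A₂, p ∈ l ↔ p ∈ stot := by
    intro p
    rw [hldef, Finset.mem_toList, Set.Finite.mem_toFinset]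
  have hprop : ∀ i : Fin l.length, (l.get i).1 ∈ Lang F₂ ∧
      α.length ≤ ((l.get i).1).length ∧ ((l.get i).2).Finite := by
    intro i
    have : l.get i ∈ stot := (hmeml _).mp (l.get_mem i)
    obtain ⟨V, -, hp⟩ := Set.mem_iUnion₂.mp (hstotdef ▸ this)
    exact hsF2 V _ hp
  have hMain : Subtype.val '' (⇑h '' K) =
      ⋃ i : Fin l.length, genCyl F₂ ((l.get i).1) ((l.get i).2) := by
    ext z
    constructor
    · rintro ⟨ysub, hysub, rfl⟩
      have : ysub ∈ U := hysub
      rw [hUU] at this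
      obtain ⟨p, hp, hyp⟩ := Set.mem_iUnion₂.mp this
      obtain ⟨i, hi⟩ := List.mem_iff_get.mp ((hmeml p).mpr hp)
      subst hi
      exact Set.mem_iUnion.mpr ⟨i, hyp⟩
    · intro hz
      rw [Set.mem_iUnion] at hz
      obtain ⟨i, hi⟩ := hz
      have hp : l.get i ∈ stot := (hmeml _).mp (l.get_mem i)
      have hzO : z ∈ OTW F₂ := hi.1
      have : (⟨z, hzO⟩ : ↥(OTW F₂)) ∈ U := by
        rw [hUU]
        exact Set.mem_iUnion₂.mpr ⟨l.get i, hp, hi⟩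
      obtain ⟨y, hyK, hyeq⟩ := this
      exact ⟨h y, ⟨y, hyK, rfl⟩, by rw [hyeq]⟩
  refine ⟨l.length, fun i => (l.get i).1, fun i => (l.get i).2, hprop, hMain, ?_⟩
  intro hfin
  set y0 : ↥(OTW F₁) := ⟨ofWord α, ofWord_mem_OTW hfin⟩ with hy0def
  have hy0K : y0 ∈ K := ofWord_mem_genCyl hfin Fs
  have hz0none : ∀ i', (h y0 : ℕ → Option A₂) i' = none ↔ α.length ≤ i' := by
    intro i'
    rw [hLP y0 i']
    exact ofWord_eq_none_iff α i'
  constructor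
  · have hz0 : (h y0 : ℕ → Option A₂) ∈ Subtype.val '' (⇑h '' K) :=
      ⟨h y0, ⟨y0, hy0K, rfl⟩, rfl⟩
    rw [hMain] at hz0
    obtain ⟨j, hj0⟩ := Set.mem_iUnion.mp hz0
    have hj : (h y0 : ℕ → Option A₂) ∈ genCyl F₂ ((l.get j).1) ((l.get j).2) := hj0
    refine ⟨j, ?_⟩
    show ofWord ((l.get j).1) = (h ⟨ofWord α, ofWord_mem_OTW hfin⟩ : ℕ → Option A₂)
    have hlen : ((l.get j).1).length = α.length := by
      have hge := (hprop j).2.1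
      rcases eq_or_lt_of_le hge with he | hlt
      · exact he.symm
      · exfalso
        have hsome := hj.2.1 α.length hlt
        rw [(hz0none α.length).mpr le_rfl] at hsome
        exact nomatch hsome.symm
    funext i'
    rcases Nat.lt_or_ge i' α.length with hi' | hi'
    · rw [ofWord_apply_lt _ i' (by omega)]
      exact (hj.2.1 i' (by omega)).symm
    · rw [(ofWord_eq_none_iff ((l.get j).1) i').mpr (by omega)]
      exact ((hz0none i').mpr hi').symm
  · intro i hleni0 hXFi0
    have hleni : ((l.get i).1).length = α.length := hleni0
    have hXFi : (l.get i).1 ∈ XFin F₂ := hXFi0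
    show ofWord ((l.get i).1) = (h ⟨ofWord α, ofWord_mem_OTW hfin⟩ : ℕ → Option A₂)
    have hmem2 : ofWord ((l.get i).1) ∈
        ⋃ i : Fin l.length, genCyl F₂ ((l.get i).1) ((l.get i).2) :=
      Set.mem_iUnion.mpr ⟨i, ofWord_mem_genCyl hXFi _⟩
    rw [← hMain] at hmem2
    obtain ⟨ysub, hysub, hyeq⟩ := hmem2
    obtain ⟨y, hyK, rfl⟩ := hysub
    have hylen : ∀ i', (y : ℕ → Option A₁) i' = none ↔ α.length ≤ i' := by
      intro i'
      rw [← hLP y i']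
      have hh : (h y : ℕ → Option A₂) i' = ofWord ((l.get i).1) i' := by rw [hyeq]
      rw [hh, ofWord_eq_none_iff, hleni]
    have hyval : (y : ℕ → Option A₁) = ofWord α := by
      funext i'
      rcases Nat.lt_or_ge i' α.length with hi' | hi'
      · rw [ofWord_apply_lt α i' hi']
        exact hyK.2.1 i' hi'
      · rw [(ofWord_eq_none_iff α i').mpr hi']
        exact (hylen i').mpr hi'
    have hy0eq : y = (⟨ofWord α, ofWord_mem_OTW hfin⟩ : ↥(OTW F₁)) := Subtype.ext hyval
    rw [← hyeq, hy0eq]
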